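/- Scalar case (d=1): let (ξ_a)_{a∈A} be i.i.d. positive random variables on the edges of the rooted b-ary tree (b ≥ 2), and for a generation-n vertex v set ξ[v] = ξ_{a_1}⋯ξ_{a_n}, the product along the root-to-v path. If b · inf_{s∈[0,1]} E[ξ_a^s] < 1, then Σ_{n≥1} Σ_{v∈V^n} ξ[v] < ∞ almost surely. -/

import Mathlib

open MeasureTheory
open scoped ENNReal

/-- The generation-`n` vertex set of the complete `b`-ary rooted tree, as words over
`{1, …, b}`. -/
def genF (b : ℕ) : ℕ → Finset (List ℕ)
  | 0 => {[]}
  | n + 1 => (genF b n).biUnion fun v => (Finset.Icc 1 b).image fun j => v ++ [j]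

lemma genF_length {b : ℕ} : ∀ {n : ℕ} {v : List ℕ}, v ∈ genF b n → v.length = n := by
  intro n
  induction n with
  | zero => intro v hv; simp [genF] at hv; simp [hv]
  | succ n ih =>
    intro v hv
    simp only [genF, Finset.mem_biUnion, Finset.mem_image] at hv
    obtain ⟨w, hw, j, hj, rfl⟩ := hv
    simp [ih hw]

lemma genF_card {b : ℕ} : ∀ n, (genF b n).card = b ^ n := by
  intro n
  induction n with
  | zero => simp [genF]
  | succ n ih =>
    rw [genF, Finset.card_biUnion]
    · have : ∀ v ∈ genF b n, ((Finset.Icc 1 b).image fun j => v ++ [j]).card = b := by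
        intro v hv
        rw [Finset.card_image_of_injective _ (fun j k h => by simpa using h), Nat.card_Icc]; omega
      rw [Finset.sum_congr rfl this, Finset.sum_const, ih, smul_eq_mul, pow_succ]
    · intro v hv w hw hvw
      simp only [Finset.disjoint_left, Finset.mem_image]
      rintro x ⟨j, hj, rfl⟩ ⟨k, hk, hx⟩
      exact hvw (List.append_inj_left hx.symm (by rw [genF_length hv, genF_length hw]))

lemma lintegral_prod_prefix {Ω : Type*} [MeasurableSpace Ω] (P : Measure Ω)
    [IsProbabilityMeasure P]
    (η : List ℕ → Ω → ℝ≥0∞) (hηm : ∀ a, Measurable (η a))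
    (hη : ProbabilityTheory.iIndepFun η P)
    (R : ℝ≥0∞) (hR : ∀ a : List ℕ, a ≠ [] → ∫⁻ ω, η a ω ∂P = R) :
    ∀ v : List ℕ,
      ∫⁻ ω, ∏ i ∈ Finset.range v.length, η (v.take (i + 1)) ω ∂P = R ^ v.length := by
  intro v
  induction v using List.reverseRecOn with
  | nil => simp
  | append_singleton v j ih =>
    set n := v.length with hn
    have hlen : (v ++ [j]).length = n + 1 := by simp [hn]
    have htake : ∀ i < n, (v ++ [j]).take (i + 1) = v.take (i + 1) := by
      intro i hi
      exact List.take_append_of_le_length (by omega)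
    have htake2 : (v ++ [j]).take (n + 1) = v ++ [j] := by
      rw [← hlen, List.take_length]
    have hsplit : ∀ ω, ∏ i ∈ Finset.range (v ++ [j]).length, η ((v ++ [j]).take (i + 1)) ω
        = (∏ i ∈ Finset.range n, η (v.take (i + 1)) ω) * η (v ++ [j]) ω := by
      intro ω
      rw [hlen, Finset.prod_range_succ, htake2]
      congr 1
      exact Finset.prod_congr rfl fun i hi => by rw [htake i (Finset.mem_range.1 hi)]
    -- the prefix set
    set Pv : Finset (List ℕ) := (Finset.range n).image (fun i => v.take (i + 1)) with hPv
    have hinj : ∀ i ∈ Finset.range n, ∀ i' ∈ Finset.range n,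
        v.take (i + 1) = v.take (i' + 1) → i = i' := by
      intro i hi i' hi' h
      have := congrArg List.length h
      simp only [List.length_take] at this
      simp only [Finset.mem_range] at hi hi'
      omega
    have hprodeq : (∏ a ∈ Pv, η a) = fun ω => ∏ i ∈ Finset.range n, η (v.take (i + 1)) ω := by
      funext ω
      rw [Finset.prod_apply, hPv, Finset.prod_image hinj]
    have hnotmem : (v ++ [j]) ∉ Pv := by
      simp only [hPv, Finset.mem_image, Finset.mem_range]
      rintro ⟨i, hi, h⟩
      have : min (i + 1) v.length = v.length + 1 := by
        simpa using congrArg List.length h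
      omega
    have hindep2 := hη.indepFun_finset_prod_of_notMem hηm hnotmem
    have hmeasprod : Measurable (∏ a ∈ Pv, η a) := by
      rw [hprodeq]; exact Finset.measurable_prod _ fun i _ => hηm _
    calc ∫⁻ ω, ∏ i ∈ Finset.range (v ++ [j]).length, η ((v ++ [j]).take (i + 1)) ω ∂P
        = ∫⁻ ω, ((∏ a ∈ Pv, η a) * η (v ++ [j])) ω ∂P := by
          refine lintegral_congr fun ω => ?_
          rw [hsplit ω]
          simp only [Pi.mul_apply]
          rw [hprodeq]
      _ = (∫⁻ ω, (∏ a ∈ Pv, η a) ω ∂P) * ∫⁻ ω, η (v ++ [j]) ω ∂P :=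
          ProbabilityTheory.lintegral_mul_eq_lintegral_mul_lintegral_of_indepFun
            hmeasprod (hηm _) hindep2
      _ = R ^ n * R := by
          rw [hR (v ++ [j]) (by simp), hprodeq, ih]
      _ = R ^ (v ++ [j]).length := by rw [hlen, pow_succ]


/-- The product `ξ_{a₁} ⋯ ξ_{aₙ}` of the scalar edge variables along the root-to-`v`
path (edges being identified with non-root vertices, i.e. the prefixes of `v`). -/
noncomputable def pathProdScalar {Ω : Type*} (ξ : List ℕ → Ω → ℝ) (v : List ℕ) (ω : Ω) :
    ℝ :=
  ∏ i ∈ Finset.range v.length, ξ (v.take (i + 1)) ω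

/-- Scalar multiplicative cascade on the `b`-ary tree: if
`b · inf_{s ∈ [0,1]} E[ξ^s] < 1`, then `Σ_{n ≥ 1} Σ_{v ∈ Vⁿ} ξ[v] < ∞` a.s. -/
theorem stmt10 {Ω : Type*} [MeasurableSpace Ω] (P : Measure Ω) [IsProbabilityMeasure P]
    (b : ℕ) (hb : 2 ≤ b) (ξ : List ℕ → Ω → ℝ)
    (hmeas : ∀ a, Measurable (ξ a))
    (hindep : ProbabilityTheory.iIndepFun ξ P)
    (hid : ∀ a : List ℕ, a ≠ [] → Measure.map (ξ a) P = Measure.map (ξ [1]) P)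
    (hpos : ∀ a, ∀ᵐ ω ∂P, 0 < ξ a ω)
    (hmom : ∀ s ∈ Set.Icc (0 : ℝ) 1, Integrable (fun ω => ξ [1] ω ^ s) P)
    (hcond : (b : ℝ) *
        sInf ((fun s : ℝ => ∫ ω, ξ [1] ω ^ s ∂P) '' Set.Icc (0 : ℝ) 1) < 1) :
    ∀ᵐ ω ∂P,
      Summable (fun n : ℕ => ∑ v ∈ genF b (n + 1), pathProdScalar ξ v ω) := by
  have hbpos : (0 : ℝ) < b := by
    have : (0 : ℕ) < b := by omega
    exact_mod_cast this
  have hb2 : (2 : ℝ) ≤ b := by exact_mod_cast hb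
  -- choose the exponent s
  have hSne : ((fun s : ℝ => ∫ ω, ξ [1] ω ^ s ∂P) '' Set.Icc (0 : ℝ) 1).Nonempty :=
    ⟨_, Set.mem_image_of_mem _ (Set.mem_Icc.2 ⟨le_refl 0, zero_le_one⟩)⟩
  have hinf : sInf ((fun s : ℝ => ∫ ω, ξ [1] ω ^ s ∂P) '' Set.Icc (0 : ℝ) 1) < 1 / b :=
    (lt_div_iff₀' hbpos).2 hcond
  obtain ⟨x, hxmem, hx⟩ := exists_lt_of_csInf_lt hSne hinf
  obtain ⟨s, hs, rfl⟩ := hxmem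
  have hbr : (b : ℝ) * (∫ ω, ξ [1] ω ^ s ∂P) < 1 := (lt_div_iff₀' hbpos).1 hx
  set r := ∫ ω, ξ [1] ω ^ s ∂P with hrdef
  have hs0 : 0 < s := by
    rcases lt_or_eq_of_le hs.1 with h | h
    · exact h
    · exfalso
      rw [hrdef, ← h] at hbr
      simp only [Real.rpow_zero, integral_const, measure_univ, probReal_univ, ENNReal.toReal_one,
        smul_eq_mul, one_mul, mul_one] at hbr
      linarith
  have hs1 : s ≤ 1 := hs.2
  have hrnn : 0 ≤ r :=
    integral_nonneg_of_ae ((hpos [1]).mono fun ω h => Real.rpow_nonneg h.le s)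
  -- the transformed variables
  set η : List ℕ → Ω → ℝ≥0∞ := fun a ω => ENNReal.ofReal (ξ a ω ^ s) with hηdef
  have hgm : Measurable (fun x : ℝ => ENNReal.ofReal (x ^ s)) :=
    (Real.continuous_rpow_const hs.1).measurable.ennreal_ofReal
  have hηm : ∀ a, Measurable (η a) := fun a => hgm.comp (hmeas a)
  have hηindep : ProbabilityTheory.iIndepFun η P :=
    hindep.comp (fun _ x => ENNReal.ofReal (x ^ s)) (fun _ => hgm)
  set R : ℝ≥0∞ := ENNReal.ofReal r with hRdef
  have hR1 : ∫⁻ ω, η [1] ω ∂P = R := by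
    rw [hRdef, hrdef, ofReal_integral_eq_lintegral_ofReal (hmom s hs)
      ((hpos [1]).mono fun ω h => Real.rpow_nonneg h.le s)]
  have hR : ∀ a : List ℕ, a ≠ [] → ∫⁻ ω, η a ω ∂P = R := by
    intro a ha
    have h1 : ∫⁻ ω, η a ω ∂P = ∫⁻ x, ENNReal.ofReal (x ^ s) ∂(Measure.map (ξ a) P) :=
      (lintegral_map hgm (hmeas a)).symm
    rw [h1, hid a ha, lintegral_map hgm (hmeas [1])]
    exact hR1
  have hF := lintegral_prod_prefix P η hηm hηindep R hR
  have hFm : ∀ v : List ℕ,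
      Measurable fun ω => ∏ i ∈ Finset.range v.length, η (v.take (i + 1)) ω :=
    fun v => Finset.measurable_prod _ fun i _ => hηm _
  set G : Ω → ℝ≥0∞ := fun ω => ∑' n : ℕ, ∑ v ∈ genF b (n + 1),
      ∏ i ∈ Finset.range v.length, η (v.take (i + 1)) ω with hGdef
  have hGint : ∫⁻ ω, G ω ∂P = ∑' n : ℕ, ((b : ℝ≥0∞) * R) ^ (n + 1) := by
    rw [hGdef]
    rw [lintegral_tsum fun n => (Finset.measurable_sum _ fun v _ => hFm v).aemeasurable]
    congr 1
    funext n
    rw [lintegral_finset_sum _ fun v _ => hFm v]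
    have heach : ∀ v ∈ genF b (n + 1),
        ∫⁻ ω, ∏ i ∈ Finset.range v.length, η (v.take (i + 1)) ω ∂P = R ^ (n + 1) :=
      fun v hv => by rw [hF v, genF_length hv]
    rw [Finset.sum_congr rfl heach, Finset.sum_const, genF_card, nsmul_eq_mul, mul_pow,
      Nat.cast_pow]
  have hRlt : (b : ℝ≥0∞) * R < 1 := by
    rw [hRdef, ← ENNReal.ofReal_natCast b, ← ENNReal.ofReal_mul (Nat.cast_nonneg b)]
    exact ENNReal.ofReal_lt_one.2 hbr
  have hGtop : ∫⁻ ω, G ω ∂P < ⊤ := by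
    rw [hGint]
    have h1 : ∑' n : ℕ, ((b : ℝ≥0∞) * R) ^ (n + 1)
        = (∑' n : ℕ, ((b : ℝ≥0∞) * R) ^ n) * ((b : ℝ≥0∞) * R) := by
      rw [← ENNReal.tsum_mul_right]
      exact tsum_congr fun n => pow_succ _ n
    rw [h1, ENNReal.tsum_geometric]
    exact ENNReal.mul_lt_top (ENNReal.inv_lt_top.2 (tsub_pos_of_lt hRlt))
      (hRlt.trans ENNReal.one_lt_top)
  have hGmeas : Measurable G :=
    Measurable.ennreal_tsum fun n => Finset.measurable_sum _ fun v _ => hFm v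
  have hae1 : ∀ᵐ ω ∂P, G ω < ⊤ := ae_lt_top hGmeas hGtop.ne
  have hae2 : ∀ᵐ ω ∂P, ∀ a : List ℕ, 0 < ξ a ω := ae_all_iff.2 hpos
  filter_upwards [hae1, hae2] with ω hωG hωpos
  have hppos : ∀ v : List ℕ, 0 < pathProdScalar ξ v ω :=
    fun v => Finset.prod_pos fun i _ => hωpos _
  have hFω : ∀ v : List ℕ, (∏ i ∈ Finset.range v.length, η (v.take (i + 1)) ω)
      = ENNReal.ofReal (pathProdScalar ξ v ω ^ s) := by
    intro v
    calc ∏ i ∈ Finset.range v.length, η (v.take (i + 1)) ω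
        = ∏ i ∈ Finset.range v.length, ENNReal.ofReal (ξ (v.take (i + 1)) ω ^ s) := rfl
      _ = ENNReal.ofReal (∏ i ∈ Finset.range v.length, ξ (v.take (i + 1)) ω ^ s) :=
          (ENNReal.ofReal_prod_of_nonneg fun i _ => Real.rpow_nonneg (hωpos _).le s).symm
      _ = ENNReal.ofReal ((∏ i ∈ Finset.range v.length, ξ (v.take (i + 1)) ω) ^ s) := by
          rw [Real.finset_prod_rpow _ _ (fun i _ => (hωpos _).le) s]
      _ = ENNReal.ofReal (pathProdScalar ξ v ω ^ s) := rfl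
  set g : ℕ → ℝ≥0∞ := fun n => ∑ v ∈ genF b (n + 1),
      ENNReal.ofReal (pathProdScalar ξ v ω ^ s) with hgdef
  have hgsum : ∑' n, g n ≠ ⊤ := by
    have hGω : G ω = ∑' n, g n :=
      tsum_congr fun n => Finset.sum_congr rfl fun v _ => hFω v
    rw [← hGω]
    exact hωG.ne
  have hh : Summable fun n => (g n).toReal := ENNReal.summable_toReal hgsum
  have hgtoReal : ∀ n, (g n).toReal = ∑ v ∈ genF b (n + 1), pathProdScalar ξ v ω ^ s := by
    intro n
    rw [hgdef, ENNReal.toReal_sum fun v _ => ENNReal.ofReal_ne_top]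
    exact Finset.sum_congr rfl fun v _ =>
      ENNReal.toReal_ofReal (Real.rpow_nonneg (hppos v).le s)
  have hBfin : {n : ℕ | 1 ≤ g n}.Finite :=
    ENNReal.finite_const_le_of_tsum_ne_top hgsum one_ne_zero
  set B := hBfin.toFinset with hBdef
  have hle : ∀ n ∉ B, (∑ v ∈ genF b (n + 1), pathProdScalar ξ v ω) ≤ (g n).toReal := by
    intro n hn
    rw [hgtoReal]
    refine Finset.sum_le_sum fun v hv => ?_
    have h2 : g n < 1 := by
      simp only [hBdef, Set.Finite.mem_toFinset, Set.mem_setOf_eq] at hn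
      exact lt_of_not_ge hn
    have hlt : ENNReal.ofReal (pathProdScalar ξ v ω ^ s) < 1 := by
      refine lt_of_le_of_lt (Finset.single_le_sum
        (f := fun w => ENNReal.ofReal (pathProdScalar ξ w ω ^ s))
        (fun w _ => bot_le) hv) ?_
      exact h2
    have h3 : pathProdScalar ξ v ω ^ s < 1 := ENNReal.ofReal_lt_one.1 hlt
    have h4 : pathProdScalar ξ v ω < 1 :=
      (Real.rpow_lt_one_iff' (hppos v).le hs0).1 h3
    calc pathProdScalar ξ v ω = pathProdScalar ξ v ω ^ (1 : ℝ) := (Real.rpow_one _).symm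
      _ ≤ pathProdScalar ξ v ω ^ s :=
          Real.rpow_le_rpow_of_exponent_ge (hppos v) h4.le hs1
  refine Summable.of_nonneg_of_le
    (fun n => Finset.sum_nonneg fun v _ => (hppos v).le)
    (fun n => ?_)
    (hh.add (summable_of_ne_finset_zero (s := B)
      (fun n hn => if_neg hn) :
      Summable fun n => if n ∈ B then ∑ v ∈ genF b (n + 1), pathProdScalar ξ v ω else 0))
  by_cases hn : n ∈ B
  · rw [if_pos hn]
    exact le_add_of_nonneg_left ENNReal.toReal_nonneg
  · rw [if_neg hn, add_zero]
    exact hle n hn
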